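/- Let p be an odd prime with 2 a primitive root modulo p^2, let l and r be positive integers, and let γ be the exponent of 2 in ord_p(2). If 2^γ ∣ l, then Σ_{i=1}^{r} φ(p^i)/ord_{p^i}(2^l) = Σ_{i=1}^{r} gcd(p^{i−1}(p−1), l). -/

import Mathlib

/-- Cast lemma: `(2 : ZMod m)^n = 1` iff `m ∣ 2^n - 1` over the integers. -/
lemma pow_eq_one_iff_int_dvd (m n : ℕ) : (2 : ZMod m) ^ n = 1 ↔ (m : ℤ) ∣ 2 ^ n - 1 := by
  rw [← ZMod.intCast_zmod_eq_zero_iff_dvd]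
  push_cast
  rw [sub_eq_zero]

lemma key_orderOf (p : ℕ) (hp : p.Prime) (hodd : Odd p)
    (hprim : orderOf (2 : ZMod (p ^ 2)) = p * (p - 1)) (i : ℕ) (hi : 1 ≤ i) :
    orderOf (2 : ZMod (p ^ i)) = p ^ (i - 1) * (p - 1) := by
  haveI : Fact p.Prime := ⟨hp⟩
  have hp2 : p ≠ 2 := by rintro rfl; exact (by decide : ¬ Odd 2) hodd
  have hp1 : 2 < p := lt_of_le_of_ne hp.two_le (Ne.symm hp2)
  have hpd2 : ¬ p ∣ 2 := fun h => absurd ((Nat.prime_dvd_prime_iff_eq hp Nat.prime_two).mp h) hp2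
  set d := orderOf (2 : ZMod p) with hd
  -- 2 ≠ 0 in ZMod p
  have h2ne : (2 : ZMod p) ≠ 0 := by
    have : ((2 : ℕ) : ZMod p) ≠ 0 := by
      rw [Ne, ZMod.natCast_eq_zero_iff]; exact hpd2
    simpa using this
  have hdvd1 : d ∣ p - 1 := by
    apply orderOf_dvd_of_pow_eq_one
    exact ZMod.pow_card_sub_one_eq_one h2ne
  have hdpos : 0 < d := by
    rcases Nat.eq_zero_or_pos d with h | h
    · rw [h] at hdvd1
      have := Nat.eq_zero_of_zero_dvd hdvd1
      omega
    · exact h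
  -- p ∣ 2^d - 1 in ℤ
  have hpdvd : (p : ℤ) ∣ 2 ^ d - 1 := by
    have : (2 : ZMod p) ^ d = 1 := pow_orderOf_eq_one _
    rw [pow_eq_one_iff_int_dvd] at this
    · exact this
  -- ¬ p^2 ∣ 2^d - 1
  have hnp2 : ¬ ((p : ℤ) ^ 2 ∣ 2 ^ d - 1) := by
    intro h
    have h1 : (2 : ZMod (p ^ 2)) ^ d = 1 := by
      rw [pow_eq_one_iff_int_dvd]
      push_cast
      exact h
    have h2 : orderOf (2 : ZMod (p ^ 2)) ∣ d := orderOf_dvd_of_pow_eq_one h1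
    rw [hprim] at h2
    have h3 : p * (p - 1) ≤ d := Nat.le_of_dvd hdpos h2
    have h4 : d ≤ p - 1 := Nat.le_of_dvd (by omega) hdvd1
    nlinarith
  -- multiplicity of p in 2^d - 1 is exactly 1
  have hmult : emultiplicity ((p : ℤ)) (2 ^ d - 1) = (1 : ℕ) := by
    rw [emultiplicity_eq_coe]
    constructor
    · simpa using hpdvd
    · simpa using hnp2
  have hp2dvd : ¬ ((p : ℤ)) ∣ (2 : ℤ) ^ d := by
    intro h
    have := (Int.Prime.dvd_pow' (by exact_mod_cast hp) h)
    have : p ∣ 2 := by exact_mod_cast this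
    exact hpd2 this
  -- LTE consequence
  have hLTE : ∀ m : ℕ, emultiplicity ((p : ℤ)) (2 ^ (d * m) - 1) =
      (1 : ℕ) + emultiplicity p m := by
    intro m
    have := Int.emultiplicity_pow_sub_pow hp hodd
      (x := (2 : ℤ) ^ d) (y := 1) (by simpa using hpdvd) hp2dvd m
    simpa [← pow_mul, hmult] using this
  -- characterization of powers of 2 equal to 1 mod p^i
  have hchar : ∀ n : ℕ, (2 : ZMod (p ^ i)) ^ n = 1 ↔ p ^ (i - 1) * d ∣ n := by
    intro n
    rw [pow_eq_one_iff_int_dvd]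
    push_cast
    constructor
    · intro h
      have hdn : d ∣ n := by
        apply orderOf_dvd_of_pow_eq_one
        rw [pow_eq_one_iff_int_dvd]
        exact dvd_trans (dvd_pow_self (p : ℤ) (by omega)) h
      obtain ⟨m, rfl⟩ := hdn
      have hle : (i : ℕ∞) ≤ emultiplicity ((p : ℤ)) (2 ^ (d * m) - 1) :=
        pow_dvd_iff_le_emultiplicity.mp h
      rw [hLTE m] at hle
      have hle2 : ((i - 1 : ℕ) : ℕ∞) ≤ emultiplicity p m := by
        rcases eq_top_or_lt_top (emultiplicity p m) with htop | hlt
        · rw [htop]; exact le_top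
        · lift emultiplicity p m to ℕ using hlt.ne with k hk
          have : i ≤ 1 + k := by exact_mod_cast hle
          exact_mod_cast (by omega : i - 1 ≤ k)
      have hpm : p ^ (i - 1) ∣ m := pow_dvd_iff_le_emultiplicity.mpr hle2
      exact (mul_dvd_mul hpm (dvd_refl d)).trans (dvd_of_eq (mul_comm m d))
    · intro h
      obtain ⟨c, rfl⟩ := h
      apply pow_dvd_iff_le_emultiplicity.mpr
      have : p ^ (i - 1) * d * c = d * (p ^ (i - 1) * c) := by ring
      rw [this, hLTE]
      have h1 : ((i - 1 : ℕ) : ℕ∞) ≤ emultiplicity p (p ^ (i - 1) * c) := by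
        apply pow_dvd_iff_le_emultiplicity.mp
        exact Dvd.intro c rfl
      calc (i : ℕ∞) = ((1 : ℕ) : ℕ∞) + ((i - 1 : ℕ) : ℕ∞) := by
              rw [← Nat.cast_add]; norm_cast; omega
        _ ≤ ((1 : ℕ) : ℕ∞) + emultiplicity p (p ^ (i - 1) * c) := by
              exact add_le_add_right h1 _
  -- orderOf mod p^i equals p^(i-1) * d
  have hord : orderOf (2 : ZMod (p ^ i)) = p ^ (i - 1) * d := by
    apply Nat.dvd_antisymm
    · exact orderOf_dvd_of_pow_eq_one ((hchar _).mpr dvd_rfl)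
    · exact (hchar _).mp (pow_orderOf_eq_one _)
  -- from hprim at i = 2 deduce d = p - 1
  have hd' : d = p - 1 := by
    have h2 : orderOf (2 : ZMod (p ^ 2)) = p ^ (2 - 1) * d := by
      -- reuse the same argument with i = 2: note hord was proved for our fixed i.
      -- We redo it by instantiating hchar-like reasoning; instead use a direct copy:
      clear hord hchar hi
      have hchar2 : ∀ n : ℕ, (2 : ZMod (p ^ 2)) ^ n = 1 ↔ p ^ (2 - 1) * d ∣ n := by
        intro n
        rw [pow_eq_one_iff_int_dvd]
        push_cast
        constructor
        · intro h
          have hdn : d ∣ n := by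
            apply orderOf_dvd_of_pow_eq_one
            rw [pow_eq_one_iff_int_dvd]
            exact dvd_trans (dvd_pow_self (p : ℤ) (by omega)) h
          obtain ⟨m, rfl⟩ := hdn
          have hle : ((2 : ℕ) : ℕ∞) ≤ emultiplicity ((p : ℤ)) (2 ^ (d * m) - 1) :=
            pow_dvd_iff_le_emultiplicity.mp (by exact_mod_cast h)
          rw [hLTE m] at hle
          have hle2 : ((1 : ℕ) : ℕ∞) ≤ emultiplicity p m := by
            rcases eq_top_or_lt_top (emultiplicity p m) with htop | hlt
            · rw [htop]; exact le_top
            · lift emultiplicity p m to ℕ using hlt.ne with k hk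
              have : 2 ≤ 1 + k := by exact_mod_cast hle
              exact_mod_cast (by omega : 1 ≤ k)
          have hpm : p ^ 1 ∣ m := pow_dvd_iff_le_emultiplicity.mpr hle2
          exact (mul_dvd_mul hpm (dvd_refl d)).trans (dvd_of_eq (mul_comm m d))
        · intro h
          obtain ⟨c, rfl⟩ := h
          apply pow_dvd_iff_le_emultiplicity.mpr
          have : p ^ (2 - 1) * d * c = d * (p ^ 1 * c) := by ring
          rw [this, hLTE]
          have h1 : ((1 : ℕ) : ℕ∞) ≤ emultiplicity p (p ^ 1 * c) := by
            apply pow_dvd_iff_le_emultiplicity.mp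
            exact Dvd.intro c rfl
          calc ((2 : ℕ) : ℕ∞) = ((1 : ℕ) : ℕ∞) + ((1 : ℕ) : ℕ∞) := by norm_cast
            _ ≤ ((1 : ℕ) : ℕ∞) + emultiplicity p (p ^ 1 * c) := add_le_add_right h1 _
      apply Nat.dvd_antisymm
      · exact orderOf_dvd_of_pow_eq_one ((hchar2 _).mpr dvd_rfl)
      · exact (hchar2 _).mp (pow_orderOf_eq_one _)
    rw [hprim, pow_one] at h2
    exact Nat.eq_of_mul_eq_mul_left (by omega) h2.symm
  rw [hord, hd']

theorem sum_primitive_root (p : ℕ) (hp : p.Prime) (hodd : Odd p)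
    (hprim : orderOf (2 : ZMod (p ^ 2)) = p * (p - 1))
    (l r γ : ℕ) (hl : 0 < l) (hr : 0 < r)
    (hγ : 2 ^ γ ∣ orderOf (2 : ZMod p) ∧ ¬ 2 ^ (γ + 1) ∣ orderOf (2 : ZMod p))
    (hdvd : 2 ^ γ ∣ l) :
    ∑ i ∈ Finset.Icc 1 r,
        (Nat.totient (p ^ i) : ℚ) / (orderOf ((2 : ZMod (p ^ i)) ^ l) : ℚ) =
      ∑ i ∈ Finset.Icc 1 r, (Nat.gcd (p ^ (i - 1) * (p - 1)) l : ℚ) := by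
  apply Finset.sum_congr rfl
  intro i hi
  rw [Finset.mem_Icc] at hi
  have hi1 : 1 ≤ i := hi.1
  have hord := key_orderOf p hp hodd hprim i hi1
  have htot : Nat.totient (p ^ i) = p ^ (i - 1) * (p - 1) := by
    rw [Nat.totient_prime_pow hp (by omega)]
  set N := p ^ (i - 1) * (p - 1) with hN
  have hNpos : 0 < N := by
    have := hp.two_le
    have : 0 < p ^ (i - 1) := Nat.pow_pos (by omega)
    have : 0 < p - 1 := by have := hp.two_le; omega
    positivity
  set g := Nat.gcd N l with hg
  have hgpos : 0 < g := Nat.gcd_pos_of_pos_left _ hNpos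
  have hgdvd : g ∣ N := Nat.gcd_dvd_left _ _
  have hordpow : orderOf ((2 : ZMod (p ^ i)) ^ l) = N / g := by
    rw [orderOf_pow' _ (by omega : l ≠ 0), hord]
  rw [htot, hordpow]
  rw [Nat.cast_div hgdvd (by exact_mod_cast hgpos.ne')]
  rw [div_div_eq_mul_div, mul_comm (N : ℚ) (g : ℚ), mul_div_assoc,
    div_self (by exact_mod_cast hNpos.ne' : (N : ℚ) ≠ 0), mul_one]
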